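/- Let N = Σ_{i=1}^d 1{Xᵢ > γ} and let ℓ̂₁ = ℓ_as(γ)/N under the mixture density g(x) = φ_Σ(x − ν) Σ_k 1{x_k > γ} / ℓ_as(γ), where ℓ_as(γ) = Σ_k P(X_k > γ). Then ℓ̂₁ is an unbiased estimator of ℓ₁(γ) = P(max_i X_i > γ): E_g[ℓ_as(γ)/N] = P(N ≥ 1). -/

import Mathlib

open MeasureTheory ProbabilityTheory Matrix
open scoped NNReal ENNReal

/-- Unbiasedness of the ISVE estimator `ℓ̂₁ = ℓ_as(γ)/N` of
`ℓ₁(γ) = P(max_i X_i > γ) = P(N ≥ 1)` under the mixture density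
`g(x) = φ_Σ(x − ν) ∑ₖ 1{x_k > γ} / ℓ_as(γ)`, where `N = ∑ᵢ 1{Xᵢ > γ}`,
`X = exp(Y)`, `Y ~ N(ν, Σ)` with `Σ = L Lᵀ`, and
`ℓ_as(γ) = ∑ₖ P(X_k > γ) > 0`. -/
theorem isve_leading_term_unbiased {d : ℕ}
    (L : Matrix (Fin d) (Fin d) ℝ) (ν : Fin d → ℝ)
    (hpos : (L * Lᵀ).PosDef) (γ : ℝ)
    (hlas : 0 < ∑ k, (((Measure.pi fun _ : Fin d => gaussianReal 0 1).map
        (fun z => ν + L.mulVec z)) {y | γ < Real.exp (y k)}).toReal) :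
    (∫ y, ((∑ k, (((Measure.pi fun _ : Fin d => gaussianReal 0 1).map
          (fun z => ν + L.mulVec z)) {y | γ < Real.exp (y k)}).toReal) /
        ((Finset.univ.filter fun i => γ < Real.exp (y i)).card : ℝ))
      ∂(((Measure.pi fun _ : Fin d => gaussianReal 0 1).map
          (fun z => ν + L.mulVec z)).withDensity
        (fun y => ENNReal.ofReal
          (((Finset.univ.filter fun i => γ < Real.exp (y i)).card : ℝ) /
            ∑ k, (((Measure.pi fun _ : Fin d => gaussianReal 0 1).map
              (fun z => ν + L.mulVec z)) {y | γ < Real.exp (y k)}).toReal)))) =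
    (((Measure.pi fun _ : Fin d => gaussianReal 0 1).map
        (fun z => ν + L.mulVec z))
      {y | 1 ≤ (Finset.univ.filter fun i => γ < Real.exp (y i)).card}).toReal := by
  set μ := ((Measure.pi fun _ : Fin d => gaussianReal 0 1).map
      (fun z => ν + L.mulVec z)) with hμ
  set ℓ := ∑ k, (μ {y | γ < Real.exp (y k)}).toReal with hℓ
  set N : (Fin d → ℝ) → ℕ := fun y => (Finset.univ.filter fun i => γ < Real.exp (y i)).card
    with hN
  have hℓpos : 0 < ℓ := hlas
  have hNmeas : Measurable N := by
    have hE : N = fun y => ∑ i, if γ < Real.exp (y i) then 1 else 0 := by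
      funext y; exact Finset.card_filter _ _
    rw [hE]
    exact Finset.measurable_sum _ fun i _ => Measurable.ite
      (measurableSet_lt measurable_const ((Real.measurable_exp).comp (measurable_pi_apply i)))
      measurable_const measurable_const
  have hmeasset : MeasurableSet {y : Fin d → ℝ | 1 ≤ N y} := hNmeas measurableSet_Ici
  have hfnn : Measurable fun y => ((N y : ℝ) / ℓ).toNNReal :=
    (((measurable_from_top.comp hNmeas : Measurable fun y => ((N y : ℕ) : ℝ))).div_const ℓ).real_toNNReal
  rw [show (fun y => ENNReal.ofReal ((N y : ℝ) / ℓ))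
      = fun y => ((((N y : ℝ) / ℓ).toNNReal : ℝ≥0) : ℝ≥0∞) from rfl,
    integral_withDensity_eq_integral_smul hfnn]
  have hpt : ∀ y, (((N y : ℝ) / ℓ).toNNReal : ℝ≥0) • (ℓ / (N y : ℝ))
      = Set.indicator {y : Fin d → ℝ | 1 ≤ N y} (fun _ => (1:ℝ)) y := by
    intro y
    rw [NNReal.smul_def, smul_eq_mul, Real.coe_toNNReal _
      (div_nonneg (Nat.cast_nonneg _) hℓpos.le)]
    by_cases h0 : N y = 0
    · have : y ∉ {y : Fin d → ℝ | 1 ≤ N y} := by simp [h0]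
      rw [Set.indicator_of_notMem this, h0]
      simp
    · have h1 : y ∈ {y : Fin d → ℝ | 1 ≤ N y} := Nat.one_le_iff_ne_zero.mpr h0
      rw [Set.indicator_of_mem h1]
      have hN0 : ((N y : ℝ)) ≠ 0 := Nat.cast_ne_zero.mpr h0
      field_simp
  calc ∫ y, (((N y : ℝ) / ℓ).toNNReal : ℝ≥0) • (ℓ / (N y : ℝ)) ∂μ
      = ∫ y, Set.indicator {y : Fin d → ℝ | 1 ≤ N y} (fun _ => (1:ℝ)) y ∂μ := by
        exact integral_congr_ae (Filter.Eventually.of_forall hpt)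
    _ = (μ {y : Fin d → ℝ | 1 ≤ N y}).toReal := by
        rw [integral_indicator hmeasset]; simp [Measure.restrict_apply_univ, Measure.real]
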